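/- Let L be a positive integer and let f : {1,…,L} → {1,…,2^L}. Suppose there exist indices i₁ < i₂ < … < i_ℓ in {1,…,L} with ℓ ≥ (4/5)·L and f(i₁) ≤ f(i₂) ≤ … ≤ f(i_ℓ). Then the number of indices i ∈ {1,…,L−1} satisfying f(i) ≤ f(i+1) ≤ 4·f(i) is at least L/10 − 1. -/

import Mathlib

/-- If `f : {1,…,L} → {1,…,2^L}` has a nondecreasing subsequence of length at
least `(4/5)L`, then the number of indices `i ∈ {1,…,L-1}` with
`f(i) ≤ f(i+1) ≤ 4 f(i)` is at least `L/10 - 1`. -/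
theorem many_dangerous_pairs (L : ℕ) (hL : 0 < L) (f : ℕ → ℕ)
    (hf : ∀ i, 1 ≤ i → i ≤ L → 1 ≤ f i ∧ f i ≤ 2 ^ L)
    (hLIS : ∃ (ℓ : ℕ) (g : Fin ℓ → ℕ), (4 / 5 : ℝ) * L ≤ ℓ ∧ StrictMono g ∧
      (∀ a, 1 ≤ g a ∧ g a ≤ L) ∧ (∀ a b, a ≤ b → f (g a) ≤ f (g b))) :
    (L : ℝ) / 10 - 1 ≤
      (((Finset.Icc 1 (L - 1)).filter
        (fun i => f i ≤ f (i + 1) ∧ f (i + 1) ≤ 4 * f i)).card : ℝ) := by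
  classical
  obtain ⟨ℓ, g, hℓ, hg, hrange, hmono⟩ := hLIS
  have hLR : (1 : ℝ) ≤ L := by exact_mod_cast hL
  have hℓpos : 0 < ℓ := by
    rcases Nat.eq_zero_or_pos ℓ with h0 | h0
    · exfalso; rw [h0] at hℓ; push_cast at hℓ; nlinarith
    · exact h0
  set n := ℓ - 1 with hn
  have hℓn : ℓ = n + 1 := by omega
  -- the sequence as a function on ℕ
  set h : ℕ → ℕ := fun k => g ⟨min k n, by omega⟩ with hh
  have hhmono : Monotone h := by
    intro j k hjk
    exact (hg.monotone (show (⟨min j n, by omega⟩ : Fin ℓ) ≤ ⟨min k n, by omega⟩ by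
      simp only [Fin.mk_le_mk]; omega))
  have hfmono : ∀ j k : ℕ, j ≤ k → f (h j) ≤ f (h k) := by
    intro j k hjk
    exact hmono _ _ (show (⟨min j n, by omega⟩ : Fin ℓ) ≤ ⟨min k n, by omega⟩ by
      simp only [Fin.mk_le_mk]; omega)
  have hstrict : ∀ j k : ℕ, j < k → k ≤ n → h j < h k := by
    intro j k hjk hk
    exact hg (show (⟨min j n, by omega⟩ : Fin ℓ) < ⟨min k n, by omega⟩ by
      simp only [Fin.mk_lt_mk]; omega)
  have hrange' : ∀ k, 1 ≤ h k ∧ h k ≤ L := fun k => hrange _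
  have gap_pos : ∀ k, k < n → h k < h (k + 1) := fun k hk =>
    hstrict k (k + 1) (by omega) (by omega)
  -- the telescoping sum of gaps
  have hsum : ∑ k ∈ Finset.range n, (h (k + 1) - h k) = h n - h 0 :=
    Finset.sum_range_tsub hhmono n
  -- adjacent pairs
  set A : Finset ℕ := (Finset.range n).filter (fun k => h (k + 1) = h k + 1) with hA
  have hAcard : 2 * n ≤ A.card + (h n - h 0) := by
    have key : ∀ k ∈ Finset.range n, 2 ≤ (if k ∈ A then 1 else 0) + (h (k + 1) - h k) := by
      intro k hk
      have hk' := Finset.mem_range.mp hk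
      have h1 := gap_pos k hk'
      by_cases hmem : k ∈ A
      · simp only [hmem, if_true]
        omega
      · simp only [hmem, if_false]
        have : ¬ h (k + 1) = h k + 1 := by
          intro he
          exact hmem (Finset.mem_filter.mpr ⟨hk, he⟩)
        omega
    calc 2 * n = ∑ _k ∈ Finset.range n, 2 := by
              rw [Finset.sum_const, Finset.card_range]; ring
      _ ≤ ∑ k ∈ Finset.range n, ((if k ∈ A then 1 else 0) + (h (k + 1) - h k)) :=
          Finset.sum_le_sum key
      _ = (∑ k ∈ Finset.range n, (if k ∈ A then 1 else 0)) + (h n - h 0) := by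
          rw [Finset.sum_add_distrib, hsum]
      _ = A.card + (h n - h 0) := by
          congr 1
          rw [Finset.sum_ite_mem, Finset.inter_comm,
            Finset.inter_eq_left.mpr (Finset.filter_subset _ _)]
          simp
          rfl
  -- bad pairs
  set B : Finset ℕ := A.filter (fun k => 4 * f (h k) < f (h k + 1)) with hB
  have hBA : B ⊆ A := Finset.filter_subset _ _
  -- growth lemma
  have growth : ∀ m, m ≤ n → 4 ^ (B.filter (fun k => k < m)).card ≤ f (h m) := by
    intro m
    induction m with
    | zero =>
      intro _
      have : (B.filter (fun k => k < 0)) = ∅ := by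
        apply Finset.filter_false_of_mem; intro k _; omega
      rw [this]
      simpa using (hf (h 0) (hrange' 0).1 (hrange' 0).2).1
    | succ m ih =>
      intro hm
      have ihm := ih (by omega)
      by_cases hmem : m ∈ B
      · have hfil : B.filter (fun k => k < m + 1) = insert m (B.filter (fun k => k < m)) := by
          ext k
          simp only [Finset.mem_filter, Finset.mem_insert]
          constructor
          · rintro ⟨hk, hlt⟩
            rcases Nat.lt_succ_iff_lt_or_eq.mp hlt with h1 | h1
            · exact Or.inr ⟨hk, h1⟩
            · exact Or.inl h1
          · rintro (rfl | ⟨hk, hlt⟩)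
            · exact ⟨hmem, by omega⟩
            · exact ⟨hk, by omega⟩
        have hnm : m ∉ B.filter (fun k => k < m) := by
          simp only [Finset.mem_filter]; omega
        rw [hfil, Finset.card_insert_of_notMem hnm]
        obtain ⟨hmA, hbad⟩ := Finset.mem_filter.mp hmem
        have hadj : h (m + 1) = h m + 1 := (Finset.mem_filter.mp hmA).2
        calc 4 ^ ((B.filter (fun k => k < m)).card + 1)
            = 4 * 4 ^ (B.filter (fun k => k < m)).card := by ring
          _ ≤ 4 * f (h m) := by omega
          _ ≤ f (h m + 1) := by omega
          _ = f (h (m + 1)) := by rw [hadj]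
      · have hfil : B.filter (fun k => k < m + 1) = B.filter (fun k => k < m) := by
          ext k
          simp only [Finset.mem_filter]
          constructor
          · rintro ⟨hk, hlt⟩
            refine ⟨hk, ?_⟩
            rcases Nat.lt_succ_iff_lt_or_eq.mp hlt with h1 | h1
            · exact h1
            · exact absurd (h1 ▸ hk) hmem
          · rintro ⟨hk, hlt⟩; exact ⟨hk, by omega⟩
        rw [hfil]
        exact le_trans ihm (hfmono m (m + 1) (by omega))
  -- bound on bad pairs
  have hBn : B.filter (fun k => k < n) = B := by
    apply Finset.filter_true_of_mem
    intro k hk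
    exact Finset.mem_range.mp (Finset.mem_filter.mp (hBA hk)).1
  have hBbound : 2 * B.card ≤ L := by
    have h1 : 4 ^ B.card ≤ f (h n) := by
      have := growth n le_rfl
      rwa [hBn] at this
    have h2 : f (h n) ≤ 2 ^ L := (hf (h n) (hrange' n).1 (hrange' n).2).2
    have h3 : 2 ^ (2 * B.card) ≤ 2 ^ L := by
      calc 2 ^ (2 * B.card) = 4 ^ B.card := by
            rw [pow_mul]; norm_num
        _ ≤ 2 ^ L := le_trans h1 h2
    exact (Nat.pow_le_pow_iff_right (by norm_num)).mp h3
  -- injection from A \ B into the dangerous set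
  set D := (Finset.Icc 1 (L - 1)).filter
      (fun i => f i ≤ f (i + 1) ∧ f (i + 1) ≤ 4 * f i) with hD
  have hinj : (A \ B).card ≤ D.card := by
    apply Finset.card_le_card_of_injOn h
    · intro k hk
      obtain ⟨hkA, hkB⟩ := Finset.mem_sdiff.mp hk
      obtain ⟨hkr, hadj⟩ := Finset.mem_filter.mp hkA
      have hkn := Finset.mem_range.mp hkr
      have h1 : 1 ≤ h k := (hrange' k).1
      have h2 : h (k + 1) ≤ L := (hrange' (k + 1)).2
      have hlt : h k < h (k + 1) := gap_pos k hkn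
      have hfle : f (h k) ≤ f (h (k + 1)) := hfmono k (k + 1) (by omega)
      have hnotbad : ¬ 4 * f (h k) < f (h k + 1) := by
        intro hc
        exact hkB (Finset.mem_filter.mpr ⟨hkA, hc⟩)
      refine Finset.mem_filter.mpr ⟨Finset.mem_Icc.mpr ⟨h1, by omega⟩, ?_, by omega⟩
      rw [← hadj]; exact hfle
    · intro j hj k hk he
      have hjn := Finset.mem_range.mp (Finset.mem_filter.mp (Finset.mem_sdiff.mp hj).1).1
      have hkn := Finset.mem_range.mp (Finset.mem_filter.mp (Finset.mem_sdiff.mp hk).1).1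
      by_contra hne
      rcases lt_trichotomy j k with h1 | h1 | h1
      · exact absurd he (Nat.ne_of_lt (hstrict j k h1 (by omega)))
      · exact hne h1
      · exact absurd he.symm (Nat.ne_of_lt (hstrict k j h1 (by omega)))
  have hsdiff : (A \ B).card = A.card - B.card := Finset.card_sdiff_of_subset hBA
  have hBleA : B.card ≤ A.card := Finset.card_le_card hBA
  -- assemble
  have c0 : h 0 ≤ h n := hhmono (Nat.zero_le n)
  have c1 : 2 * n + h 0 ≤ A.card + h n := by omega
  have c2 : 2 * n + 1 ≤ A.card + L := by
    have := (hrange' 0).1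
    have := (hrange' n).2
    omega
  have c3 : A.card ≤ D.card + B.card := by omega
  have r1 : (2 * n + 1 : ℝ) ≤ (A.card : ℝ) + L := by exact_mod_cast c2
  have r2 : (2 * (B.card : ℝ)) ≤ L := by exact_mod_cast hBbound
  have r3 : (A.card : ℝ) ≤ (D.card : ℝ) + B.card := by exact_mod_cast c3
  have r4 : (ℓ : ℝ) = (n : ℝ) + 1 := by exact_mod_cast hℓn
  linarith
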